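/- arXiv:2403.20286 — 2 statements merged into one kernel-verified Lean document; each statement's English description precedes it below -/
import Mathlib

section
/- Let Z = {x ∈ ℝ⁵ : x₁² + x₂² = x₄² + x₅² and ∑_{i=1}^5 x_i² = 1} be the intersection of coaxial ellipsoids associated to the square pyramid P_{p4} (tuple 𝒜 = ((−1)², 0, (1)²) in ℝ). Then Z, with its subspace topology, is simply connected (it is path-connected and its fundamental group at every basepoint is trivial). -/
open Set unitInterval CategoryTheory

attribute [local instance] Path.Homotopic.setoid

noncomputable section

variable {X : Type*} [TopologicalSpace X]

lemma Path.Homotopic.comp_lift {x₀ x₁ x₂ : X} (P₀ : Path x₀ x₁) (P₁ : Path x₁ x₂) :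
    (⟦P₀.trans P₁⟧ : Path.Homotopic.Quotient x₀ x₂) = Path.Homotopic.Quotient.trans ⟦P₀⟧ ⟦P₁⟧ :=
  rfl

/-- Lift a path whose image lies in `s` to a path in the subtype `s`. -/
def liftPath {s : Set X} {x y : X} (p : Path x y) (hp : ∀ t, p t ∈ s) :
    Path (⟨x, by simpa using hp 0⟩ : s) (⟨y, by simpa using hp 1⟩ : s) where
  toFun t := ⟨p t, hp t⟩
  continuous_toFun := p.continuous.subtype_mk _
  source' := Subtype.ext (by simp)
  target' := Subtype.ext (by simp)

lemma liftPath_map {s : Set X} {x y : X} (p : Path x y) (hp : ∀ t, p t ∈ s) :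
    (liftPath p hp).map continuous_subtype_val = p := by
  ext t
  rfl

/-- Two paths whose images lie in a simply connected subset are homotopic. -/
lemma quot_eq_of_mem {s : Set X} [SimplyConnectedSpace s] {x y : X} (p q : Path x y)
    (hp : ∀ t, p t ∈ s) (hq : ∀ t, q t ∈ s) :
    (⟦p⟧ : Path.Homotopic.Quotient x y) = ⟦q⟧ := by
  have h := SimplyConnectedSpace.paths_homotopic (liftPath p hp) (liftPath q hq)
  have h2 := h.map (f := ⟨Subtype.val, continuous_subtype_val⟩)
  rw [liftPath_map, liftPath_map] at h2
  exact Quotient.sound h2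

section Split

variable {x y : X} (γ : Path x y) (c : I)

/-- First part of a path, up to time `c`. -/
def firstPart : Path x (γ c) where
  toFun s := γ ⟨(c : ℝ) * s, mul_mem (c.2) s.2⟩
  continuous_toFun := γ.continuous.comp (by
    apply Continuous.subtype_mk
    exact (continuous_const.mul continuous_subtype_val))
  source' := by norm_num
  target' := by norm_num

/-- Second part of a path, from time `c` on. -/
def secondPart : Path (γ c) y where
  toFun s := γ ⟨(c : ℝ) + s * (1 - c), by
    constructor
    · have := s.2.1
      have := c.2.1
      have h1 : (0:ℝ) ≤ 1 - c := by linarith [c.2.2]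
      nlinarith
    · have hs := s.2.2
      have h1 : (0:ℝ) ≤ 1 - c := by linarith [c.2.2]
      nlinarith [s.2.1]⟩
  continuous_toFun := γ.continuous.comp (by
    apply Continuous.subtype_mk
    exact continuous_const.add (continuous_subtype_val.mul continuous_const))
  source' := by norm_num
  target' := by norm_num

lemma firstPart_apply (s : I) : firstPart γ c s = γ ⟨(c : ℝ) * s, mul_mem c.2 s.2⟩ := rfl

lemma secondPart_coord_mem (s : I) : (c : ℝ) + s * (1 - c) ∈ I := by
  constructor
  · have h1 : (0:ℝ) ≤ 1 - c := by linarith [c.2.2]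
    nlinarith [s.2.1, c.2.1]
  · have h1 : (0:ℝ) ≤ 1 - c := by linarith [c.2.2]
    nlinarith [s.2.1, s.2.2, c.2.1, c.2.2]

lemma secondPart_apply (s : I) :
    secondPart γ c s = γ ⟨(c : ℝ) + s * (1 - c), secondPart_coord_mem c s⟩ := rfl

/-- real-valued splitting reparametrisation -/
def splitFunAux (s : I) : ℝ :=
  if (s : ℝ) ≤ 1 / 2 then (c:ℝ) * (2 * s) else (c:ℝ) + (2 * s - 1) * (1 - c)

lemma splitFunAux_mem (s : I) : splitFunAux c s ∈ I := by
  unfold splitFunAux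
  split_ifs with h
  · constructor
    · have := s.2.1; have := c.2.1; positivity
    · nlinarith [c.2.2, s.2.1, c.2.1]
  · push_neg at h
    constructor
    · nlinarith [c.2.1, c.2.2, s.2.2]
    · nlinarith [c.2.1, c.2.2, s.2.2]

/-- reparametrisation splitting function -/
def splitFun (s : I) : I := ⟨splitFunAux c s, splitFunAux_mem c s⟩

lemma continuous_splitFun : Continuous (splitFun c) := by
  apply Continuous.subtype_mk
  apply Continuous.if_le
  · fun_prop
  · fun_prop
  · fun_prop
  · fun_prop
  · intro a ha
    rw [ha]
    ring

lemma splitFun_zero : splitFun c 0 = 0 := by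
  apply Subtype.ext
  simp [splitFun, splitFunAux]

lemma splitFun_one : splitFun c 1 = 1 := by
  apply Subtype.ext
  simp [splitFun, splitFunAux]
  norm_num

lemma trans_eq_reparam :
    (firstPart γ c).trans (secondPart γ c) =
      γ.reparam (splitFun c) (continuous_splitFun c) (splitFun_zero c) (splitFun_one c) := by
  ext s
  by_cases h : (s : ℝ) ≤ 1/2
  · rw [Path.trans_apply, dif_pos h, Path.coe_reparam]
    simp only [Function.comp_apply, splitFun, splitFunAux]
    rw [firstPart_apply]
    congr 1
    apply Subtype.ext
    simp only [if_pos h]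
  · rw [Path.trans_apply, dif_neg h, Path.coe_reparam]
    simp only [Function.comp_apply, splitFun, splitFunAux]
    rw [secondPart_apply]
    congr 1
    apply Subtype.ext
    simp only [if_neg h]

/-- splitting a path's homotopy class at time `c` -/
lemma split_quotient :
    (⟦γ⟧ : Path.Homotopic.Quotient x y) =
      Path.Homotopic.Quotient.trans ⟦firstPart γ c⟧ ⟦secondPart γ c⟧ := by
  rw [← Path.Homotopic.comp_lift, trans_eq_reparam γ c]
  exact Quotient.sound ⟨Path.Homotopy.reparam γ (splitFun c) (continuous_splitFun c)
    (splitFun_zero c) (splitFun_one c)⟩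

end Split

section VK

variable (U V : Set X)

lemma trans_mem {s : Set X} {x y z : X} {p : Path x y} {q : Path y z}
    (hp : ∀ t, p t ∈ s) (hq : ∀ t, q t ∈ s) : ∀ t, (p.trans q) t ∈ s := by
  intro t
  rw [Path.trans_apply]
  split_ifs
  · exact hp _
  · exact hq _

lemma quot_comp_assoc {a b c d : X} (p : Path.Homotopic.Quotient a b)
    (q : Path.Homotopic.Quotient b c) (r : Path.Homotopic.Quotient c d) :
    (p.trans q).trans r = p.trans (q.trans r) := by
  induction p using Quotient.inductionOn
  induction q using Quotient.inductionOn
  induction r using Quotient.inductionOn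
  rw [← Path.Homotopic.comp_lift, ← Path.Homotopic.comp_lift, ← Path.Homotopic.comp_lift,
    ← Path.Homotopic.comp_lift]
  exact Quotient.sound ⟨Path.Homotopy.transAssoc _ _ _⟩

/-- The invariant: the class `m` is either represented by a path in `U`, or by a
composite of a path in `U` followed by a path in `V`. -/
def Good {a b : X} (m : Path.Homotopic.Quotient a b) : Prop :=
  (∃ q : Path a b, (∀ t, q t ∈ U) ∧ m = ⟦q⟧) ∨
  (∃ (c : X) (q : Path a c) (r : Path c b), (∀ t, q t ∈ U) ∧ (∀ t, r t ∈ V) ∧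
    m = Path.Homotopic.Quotient.trans ⟦q⟧ ⟦r⟧)

lemma Good.step [SimplyConnectedSpace V] (hO : IsPathConnected (U ∩ V)) {a b b' : X}
    {m : Path.Homotopic.Quotient a b} (hm : Good U V m) (p : Path b b')
    (hp : (∀ t, p t ∈ U) ∨ (∀ t, p t ∈ V)) : Good U V (m.trans ⟦p⟧) := by
  rcases hm with ⟨q, hq, rfl⟩ | ⟨c, q, r, hq, hr, rfl⟩
  · rcases hp with hpU | hpV
    · exact Or.inl ⟨q.trans p, trans_mem hq hpU, (Path.Homotopic.comp_lift q p).symm⟩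
    · exact Or.inr ⟨b, q, p, hq, hpV, rfl⟩
  · rcases hp with hpU | hpV
    · have hcU : c ∈ U := by have := hq 1; rwa [q.target] at this
      have hcV : c ∈ V := by have := hr 0; rwa [r.source] at this
      have hbV : b ∈ V := by have := hr 1; rwa [r.target] at this
      have hbU : b ∈ U := by have := hpU 0; rwa [p.source] at this
      obtain ⟨r', hr'⟩ := hO.joinedIn c ⟨hcU, hcV⟩ b ⟨hbU, hbV⟩
      have hrr : (⟦r⟧ : Path.Homotopic.Quotient c b) = ⟦r'⟧ :=
        quot_eq_of_mem r r' hr fun t => (hr' t).2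
      refine Or.inl ⟨(q.trans r').trans p,
        trans_mem (trans_mem hq fun t => (hr' t).1) hpU, ?_⟩
      rw [hrr, ← Path.Homotopic.comp_lift, ← Path.Homotopic.comp_lift]
    · refine Or.inr ⟨c, q, r.trans p, hq, trans_mem hr hpV, ?_⟩
      rw [quot_comp_assoc ⟦q⟧ ⟦r⟧ ⟦p⟧, ← Path.Homotopic.comp_lift]

/-- Fineness: each subinterval of length `≤ 1/n` is mapped into `U` or into `V`. -/
def Fine (n : ℕ) {a b : X} (γ : Path a b) : Prop :=
  ∀ s t : I, s ≤ t → ((t : ℝ) - s) * n ≤ 1 →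
    (∀ u : I, s ≤ u → u ≤ t → γ u ∈ U) ∨ (∀ u : I, s ≤ u → u ≤ t → γ u ∈ V)

lemma good_comp [SimplyConnectedSpace V] (hO : IsPathConnected (U ∩ V)) :
    ∀ n : ℕ, ∀ {a b b' : X} (m : Path.Homotopic.Quotient a b) (γ : Path b b'),
      Good U V m → Fine U V n γ → Good U V (m.trans ⟦γ⟧) := by
  intro n
  induction n with
  | zero =>
    intro a b b' m γ hm hγ
    have h01 : (0 : I) ≤ 1 := by norm_num [← Subtype.coe_le_coe]
    have h := hγ 0 1 h01 (by norm_num)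
    refine Good.step U V hO hm γ (h.imp ?_ ?_) <;>
      exact fun hh u => hh u (by exact_mod_cast u.2.1) (by exact_mod_cast u.2.2)
  | succ n IH =>
    intro a b b' m γ hm hγ
    have hn1 : (0 : ℝ) < (n : ℝ) + 1 := by positivity
    set c : I := ⟨1 / ((n : ℝ) + 1), by
      constructor
      · positivity
      · rw [div_le_one hn1]; linarith [Nat.cast_nonneg (α := ℝ) n]⟩ with hc
    rw [split_quotient γ c, ← quot_comp_assoc m ⟦firstPart γ c⟧ ⟦secondPart γ c⟧]
    apply IH (m.trans ⟦firstPart γ c⟧) (secondPart γ c) ?_ ?_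
    · -- first part is a single piece
      apply Good.step U V hO hm
      have h0c : (0 : I) ≤ c := by
        rw [← Subtype.coe_le_coe]
        show (0:ℝ) ≤ 1 / ((n:ℝ)+1)
        positivity
      have h := hγ 0 c h0c (by
        show ((c : ℝ) - (0:I)) * ((n:ℕ)+1 : ℕ) ≤ 1
        push_cast
        rw [sub_zero, div_mul_cancel₀ _ (ne_of_gt hn1)])
      refine h.imp ?_ ?_ <;>
        · intro hh u
          rw [firstPart_apply]
          apply hh
          · rw [← Subtype.coe_le_coe]
            show (0:ℝ) ≤ (c:ℝ) * u
            exact mul_nonneg c.2.1 u.2.1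
          · rw [← Subtype.coe_le_coe]
            show (c:ℝ) * u ≤ (c:ℝ)
            nlinarith [u.2.2, c.2.1]
    · -- second part is n-fine
      intro s t hst hb
      have hcle : (0:ℝ) ≤ 1 - (c:ℝ) := by linarith [c.2.2]
      have hmem := secondPart_coord_mem c
      have harg : ((⟨(c:ℝ) + t * (1 - c), hmem t⟩ : I) : ℝ) - (⟨(c:ℝ) + s * (1 - c), hmem s⟩ : I) = ((t:ℝ) - s) * (1 - c) := by
        push_cast
        ring
      have hkey : (1 - (c:ℝ)) * ((n:ℝ) + 1) = n := by
        show (1 - 1/((n:ℝ)+1)) * ((n:ℝ)+1) = n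
        field_simp
        ring
      have h := hγ ⟨(c:ℝ) + s * (1 - c), hmem s⟩ ⟨(c:ℝ) + t * (1 - c), hmem t⟩
        (by
          rw [← Subtype.coe_le_coe]
          show (c:ℝ) + s * (1 - c) ≤ (c:ℝ) + t * (1 - c)
          have : (s:ℝ) ≤ t := hst
          nlinarith)
        (by
          show (((⟨(c:ℝ) + t * (1 - c), hmem t⟩ : I) : ℝ) - (⟨(c:ℝ) + s * (1 - c), hmem s⟩ : I)) * ((n:ℕ)+1 : ℕ) ≤ 1
          rw [harg]
          push_cast
          calc ((t:ℝ) - s) * (1 - c) * ((n:ℝ) + 1) = ((t:ℝ) - s) * ((1 - (c:ℝ)) * ((n:ℝ)+1)) := by ring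
          _ = ((t:ℝ) - s) * n := by rw [hkey]
          _ ≤ 1 := hb)
      refine h.imp ?_ ?_ <;>
        · intro hh u hsu hut
          rw [secondPart_apply]
          apply hh
          · rw [← Subtype.coe_le_coe]
            show (c:ℝ) + s * (1 - c) ≤ (c:ℝ) + u * (1 - c)
            have : (s:ℝ) ≤ u := hsu
            nlinarith
          · rw [← Subtype.coe_le_coe]
            show (c:ℝ) + u * (1 - c) ≤ (c:ℝ) + t * (1 - c)
            have : (u:ℝ) ≤ t := hut
            nlinarith

lemma exists_fine (hUo : IsOpen U) (hVo : IsOpen V) (hcover : U ∪ V = univ)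
    {a b : X} (γ : Path a b) : ∃ n : ℕ, Fine U V n γ := by
  classical
  set A : Set I := ⇑γ ⁻¹' Uᶜ with hA
  set B : Set I := ⇑γ ⁻¹' Vᶜ with hB
  have hAc : IsClosed A := hUo.isClosed_compl.preimage γ.continuous
  have hBc : IsClosed B := hVo.isClosed_compl.preimage γ.continuous
  have hdisj : ∀ u : I, ¬(u ∈ A ∧ u ∈ B) := by
    rintro u ⟨huA, huB⟩
    have : γ u ∈ U ∪ V := hcover ▸ mem_univ _
    rcases this with h | h
    · exact huA h
    · exact huB h
  by_cases hA0 : A = ∅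
  · refine ⟨0, fun s t hst hb => Or.inl fun u hsu hut => ?_⟩
    by_contra h
    have hu : u ∈ A := by simp only [hA, mem_preimage, mem_compl_iff]; exact h
    rw [hA0] at hu
    exact hu
  by_cases hB0 : B = ∅
  · refine ⟨0, fun s t hst hb => Or.inr fun u hsu hut => ?_⟩
    by_contra h
    have hu : u ∈ B := by simp only [hB, mem_preimage, mem_compl_iff]; exact h
    rw [hB0] at hu
    exact hu
  · obtain ⟨p₀, hp₀, hmin⟩ := (hAc.isCompact.prod hBc.isCompact).exists_isMinOn
      ((nonempty_iff_ne_empty.2 hA0).prod (nonempty_iff_ne_empty.2 hB0))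
      (continuous_dist.continuousOn (s := A ×ˢ B))
    have hδpos : 0 < dist p₀.1 p₀.2 := by
      rw [dist_pos]
      intro hEq
      exact hdisj p₀.1 ⟨hp₀.1, hEq ▸ hp₀.2⟩
    set δ := dist p₀.1 p₀.2
    obtain ⟨n, hn⟩ := exists_nat_gt (1/δ)
    have hnpos : (0:ℝ) < n := lt_trans (by positivity) hn
    have h1n : (1:ℝ) < δ * n := by
      rw [div_lt_iff₀ hδpos] at hn
      linarith
    refine ⟨n, fun s t hst hb => ?_⟩
    have hts : (t:ℝ) - s < δ := by
      by_contra h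
      push_neg at h
      nlinarith
    by_cases hAempt : ∀ u : I, s ≤ u → u ≤ t → u ∉ A
    · exact Or.inl fun u hsu hut => by
        have := hAempt u hsu hut
        rw [hA, mem_preimage, notMem_compl_iff] at this
        exact this
    · push_neg at hAempt
      obtain ⟨u₀, hsu₀, hu₀t, hu₀A⟩ := hAempt
      refine Or.inr fun u hsu hut => ?_
      have huB : u ∉ B := by
        intro huB
        have hd : dist u₀ u < δ := by
          rw [Subtype.dist_eq, Real.dist_eq, abs_lt]
          constructor
          · have h1 : (s:ℝ) ≤ u₀ := hsu₀
            have h2 : (u:ℝ) ≤ t := hut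
            linarith
          · have h1 : (s:ℝ) ≤ u := hsu
            have h2 : (u₀:ℝ) ≤ t := hu₀t
            linarith
        have hge : dist p₀.1 p₀.2 ≤ dist u₀ u := hmin (Set.mk_mem_prod hu₀A huB)
        exact absurd hge (not_le.2 hd)
      rw [hB, mem_preimage, notMem_compl_iff] at huB
      exact huB

theorem loop_class_trivial (hUo : IsOpen U) (hVo : IsOpen V) (hcover : U ∪ V = univ)
    [SimplyConnectedSpace U] [SimplyConnectedSpace V] (hO : IsPathConnected (U ∩ V))
    {a : X} (haU : a ∈ U) (haV : a ∉ V) (γ : Path a a) :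
    (⟦γ⟧ : Path.Homotopic.Quotient a a) = ⟦Path.refl a⟧ := by
  obtain ⟨n, hn⟩ := exists_fine U V hUo hVo hcover γ
  have h0 : Good U V (⟦Path.refl a⟧ : Path.Homotopic.Quotient a a) :=
    Or.inl ⟨Path.refl a, fun t => by simpa using haU, rfl⟩
  have h := good_comp U V hO n _ γ h0 hn
  have hre : Path.Homotopic.Quotient.trans (⟦Path.refl a⟧ : Path.Homotopic.Quotient a a) ⟦γ⟧ = ⟦γ⟧ := by
    rw [← Path.Homotopic.comp_lift]
    exact Quotient.sound ⟨Path.Homotopy.reflTrans γ⟩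
  rw [hre] at h
  rcases h with ⟨q, hq, hqe⟩ | ⟨c, q, r, hq, hr, _⟩
  · rw [hqe]
    exact quot_eq_of_mem q (Path.refl a) hq fun t => by simpa using haU
  · exact absurd (by have := hr 1; rwa [r.target] at this) haV

/-- Special case of the van Kampen theorem: if `X` is covered by two open, simply
connected subsets whose intersection is path-connected, then the fundamental group
at a point of `U \ V` is trivial. -/
theorem subsingleton_fundamentalGroup_of_cover (hUo : IsOpen U) (hVo : IsOpen V)
    (hcover : U ∪ V = univ) [SimplyConnectedSpace U] [SimplyConnectedSpace V]
    (hO : IsPathConnected (U ∩ V)) {a : X} (haU : a ∈ U) (haV : a ∉ V) :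
    Subsingleton (FundamentalGroup X a) := by
  constructor
  intro f g
  have key : ∀ m : Path.Homotopic.Quotient a a, m = ⟦Path.refl a⟧ := fun m =>
    Quotient.inductionOn m fun γ => loop_class_trivial U V hUo hVo hcover hO haU haV γ
  exact (key f.toPath).trans (key g.toPath).symm

end VK

/-! ### The specific space: suspension of the torus -/

section Specific

abbrev T5 : Type := {x : Fin 5 → ℝ // x 0 ^ 2 + x 1 ^ 2 = x 3 ^ 2 + x 4 ^ 2 ∧ ∑ i, x i ^ 2 = 1}

lemma T5.sum_eq (p : T5) :
    p.1 0 ^ 2 + p.1 1 ^ 2 + p.1 2 ^ 2 + p.1 3 ^ 2 + p.1 4 ^ 2 = 1 := by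
  have := p.2.2
  rwa [Fin.sum_univ_five] at this

lemma T5.eqn (p : T5) : 2 * (p.1 0 ^ 2 + p.1 1 ^ 2) + p.1 2 ^ 2 = 1 := by
  have h1 := p.2.1
  have h2 := T5.sum_eq p
  linarith

lemma T5.coord2_mem (p : T5) : p.1 2 ^ 2 ≤ 1 := by
  nlinarith [T5.eqn p, sq_nonneg (p.1 0), sq_nonneg (p.1 1)]

lemma contMk {α : Type*} [TopologicalSpace α] {f g h k l : α → ℝ}
    (hf : Continuous f) (hg : Continuous g) (hh : Continuous h) (hk : Continuous k)
    (hl : Continuous l) : Continuous fun a => ![f a, g a, h a, k a, l a] := by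
  apply continuous_pi
  intro i
  fin_cases i <;> simpa

variable (ε : ℝ)

/-- the open set `{x : εx₂ > -1}`, complement of one of the two suspension poles. -/
def Uset : Set T5 := {p | -1 < ε * p.1 2}

lemma isOpen_Uset : IsOpen (Uset ε) := by
  have : Continuous fun p : T5 => ε * p.1 2 :=
    continuous_const.mul ((continuous_apply 2).comp continuous_subtype_val)
  exact isOpen_Ioi.preimage this

/-- the pole `(0,0,ε,0,0)`. -/
def pole (hε : ε ^ 2 = 1) : T5 :=
  ⟨![0, 0, ε, 0, 0], by
    constructor
    · norm_num [Matrix.cons_val_three, Matrix.cons_val_four]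
    · rw [Fin.sum_univ_five]
      norm_num [hε, Matrix.cons_val_two, Matrix.cons_val_three, Matrix.cons_val_four]⟩

lemma pole_mem (hε : ε ^ 2 = 1) : pole ε hε ∈ Uset ε := by
  show -1 < ε * (![0, 0, ε, 0, 0] 2)
  norm_num [Matrix.cons_val_two]
  nlinarith

section Contraction

variable (ε : ℝ)

/-- time coordinate of the homotopy -/
def cs (q : I × ↥(Uset ε)) : ℝ := q.1

/-- vertical coordinate of the point -/
def ct (q : I × ↥(Uset ε)) : ℝ := ((q.2 : T5) : Fin 5 → ℝ) 2

/-- `i`-th coordinate of the point -/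
def cx (i : Fin 5) (q : I × ↥(Uset ε)) : ℝ := ((q.2 : T5) : Fin 5 → ℝ) i

/-- new vertical coordinate -/
def ctau (q : I × ↥(Uset ε)) : ℝ := (1 - cs ε q) * ct ε q + ε * cs ε q

/-- scaling factor -/
def clam (q : I × ↥(Uset ε)) : ℝ :=
  Real.sqrt ((1 - cs ε q) * (1 + ε * ctau ε q) / (1 + ε * ct ε q))

/-- the new point -/
def cvec (q : I × ↥(Uset ε)) : Fin 5 → ℝ :=
  ![clam ε q * cx ε 0 q, clam ε q * cx ε 1 q, ctau ε q, clam ε q * cx ε 3 q,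
    clam ε q * cx ε 4 q]

variable {ε}

lemma hden (q : I × ↥(Uset ε)) : 0 < 1 + ε * ct ε q := by
  have := q.2.2
  simp only [Uset, mem_setOf_eq] at this
  unfold ct
  linarith

lemma hs01 (q : I × ↥(Uset ε)) : 0 ≤ cs ε q ∧ cs ε q ≤ 1 := q.1.2

lemma htau1 (hε : ε ^ 2 = 1) (q : I × ↥(Uset ε)) : 0 ≤ 1 + ε * ctau ε q := by
  obtain ⟨h0, h1⟩ := hs01 q
  have hd := hden q
  unfold ctau
  nlinarith

lemma hlam_sq (hε : ε ^ 2 = 1) (q : I × ↥(Uset ε)) :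
    clam ε q ^ 2 = (1 - cs ε q) * (1 + ε * ctau ε q) / (1 + ε * ct ε q) := by
  apply Real.sq_sqrt
  exact div_nonneg (mul_nonneg (by linarith [(hs01 q).2]) (htau1 hε q)) (hden q).le

lemma hkey (hε : ε ^ 2 = 1) (q : I × ↥(Uset ε)) :
    1 - ε * ctau ε q = (1 - cs ε q) * (1 - ε * ct ε q) := by
  unfold ctau
  linear_combination (-(cs ε q)) * hε

lemma hlam2 (hε : ε ^ 2 = 1) (q : I × ↥(Uset ε)) :
    clam ε q ^ 2 * (1 - ct ε q ^ 2) = 1 - ctau ε q ^ 2 := by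
  have h1 : 1 - ct ε q ^ 2 = (1 + ε * ct ε q) * (1 - ε * ct ε q) := by
    linear_combination (ct ε q ^ 2) * hε
  have h2 : 1 - ctau ε q ^ 2 = (1 + ε * ctau ε q) * (1 - ε * ctau ε q) := by
    linear_combination (ctau ε q ^ 2) * hε
  rw [hlam_sq hε q, h1, h2, hkey hε q]
  field_simp [(hden q).ne']

lemma cvec_mem (hε : ε ^ 2 = 1) (q : I × ↥(Uset ε)) :
    cvec ε q 0 ^ 2 + cvec ε q 1 ^ 2 = cvec ε q 3 ^ 2 + cvec ε q 4 ^ 2 ∧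
      ∑ i, cvec ε q i ^ 2 = 1 := by
  have hc := (q.2 : T5).2.1
  have hsum := T5.sum_eq (q.2 : T5)
  have hl2 := hlam2 hε q
  constructor
  · show (clam ε q * cx ε 0 q) ^ 2 + (clam ε q * cx ε 1 q) ^ 2 =
      (clam ε q * cx ε 3 q) ^ 2 + (clam ε q * cx ε 4 q) ^ 2
    unfold cx
    nlinarith [hc]
  · rw [Fin.sum_univ_five]
    show (clam ε q * cx ε 0 q) ^ 2 + (clam ε q * cx ε 1 q) ^ 2 + ctau ε q ^ 2 +
      (clam ε q * cx ε 3 q) ^ 2 + (clam ε q * cx ε 4 q) ^ 2 = 1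
    unfold cx ct at *
    nlinarith [hl2, hsum]

lemma cvec_memU (hε : ε ^ 2 = 1) (q : I × ↥(Uset ε)) :
    (⟨cvec ε q, cvec_mem hε q⟩ : T5) ∈ Uset ε := by
  show -1 < ε * cvec ε q 2
  have h2 : cvec ε q 2 = ctau ε q := rfl
  rw [h2]
  obtain ⟨h0, h1⟩ := hs01 q
  have hd := hden q
  rcases eq_or_lt_of_le h1 with h | h
  · unfold ctau
    rw [← h]
    nlinarith
  · unfold ctau
    nlinarith

lemma continuous_cParts :
    Continuous (cs ε) ∧ (∀ i : Fin 5, Continuous (cx ε i)) := by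
  constructor
  · exact continuous_subtype_val.comp continuous_fst
  · intro i
    exact (continuous_apply i).comp
      (continuous_subtype_val.comp (continuous_subtype_val.comp continuous_snd))

lemma continuous_ctau : Continuous (ctau ε) := by
  obtain ⟨h1, h2⟩ := continuous_cParts (ε := ε)
  have hct : Continuous (ct ε) := h2 2
  unfold ctau
  fun_prop

lemma continuous_clam : Continuous (clam ε) := by
  obtain ⟨h1, h2⟩ := continuous_cParts (ε := ε)
  have hct : Continuous (ct ε) := h2 2
  have htau : Continuous (ctau ε) := continuous_ctau
  apply Real.continuous_sqrt.comp
  apply Continuous.div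
  · fun_prop
  · fun_prop
  · exact fun q => (hden q).ne'

/-- The contraction homotopy as a continuous map. -/
def cH (hε : ε ^ 2 = 1) : C(I × ↥(Uset ε), ↥(Uset ε)) := by
  refine ⟨fun q => ⟨⟨cvec ε q, cvec_mem hε q⟩, cvec_memU hε q⟩, ?_⟩
  apply Continuous.subtype_mk
  apply Continuous.subtype_mk
  obtain ⟨h1, h2⟩ := continuous_cParts (ε := ε)
  exact contMk (continuous_clam.mul (h2 0)) (continuous_clam.mul (h2 1))
    continuous_ctau (continuous_clam.mul (h2 3)) (continuous_clam.mul (h2 4))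

lemma contractible_Uset (hε : ε ^ 2 = 1) : ContractibleSpace ↥(Uset ε) := by
  rw [contractible_iff_id_nullhomotopic]
  refine ⟨⟨pole ε hε, pole_mem ε hε⟩, ⟨?_⟩⟩
  refine { toContinuousMap := cH hε, map_zero_left := ?_, map_one_left := ?_ }
  · intro x
    apply Subtype.ext
    apply Subtype.ext
    have hs : cs ε (0, x) = 0 := rfl
    have hlam1 : clam ε (0, x) = 1 := by
      unfold clam ctau
      rw [hs]
      rw [show (1 - (0:ℝ)) * (1 + ε * ((1 - 0) * ct ε (0, x) + ε * 0)) / (1 + ε * ct ε (0, x))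
          = 1 from by
        rw [div_eq_one_iff_eq (hden (0, x)).ne']
        ring]
      exact Real.sqrt_one
    show cvec ε (0, x) = ((x : T5) : Fin 5 → ℝ)
    funext i
    fin_cases i
    · show clam ε (0, x) * cx ε 0 (0, x) = _
      rw [hlam1, one_mul]; rfl
    · show clam ε (0, x) * cx ε 1 (0, x) = _
      rw [hlam1, one_mul]; rfl
    · show ctau ε (0, x) = _
      unfold ctau
      rw [hs]
      show (1 - 0) * ct ε (0, x) + ε * 0 = ((x : T5) : Fin 5 → ℝ) 2
      unfold ct
      ring
    · show clam ε (0, x) * cx ε 3 (0, x) = _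
      rw [hlam1, one_mul]; rfl
    · show clam ε (0, x) * cx ε 4 (0, x) = _
      rw [hlam1, one_mul]; rfl
  · intro x
    apply Subtype.ext
    apply Subtype.ext
    have hs : cs ε (1, x) = 1 := rfl
    have hlam0 : clam ε (1, x) = 0 := by
      unfold clam
      rw [hs]
      rw [show (1 - (1:ℝ)) * (1 + ε * ctau ε (1, x)) / (1 + ε * ct ε (1, x)) = 0 from by
        rw [div_eq_zero_iff]
        left
        ring]
      exact Real.sqrt_zero
    show cvec ε (1, x) = ![0, 0, ε, 0, 0]
    funext i
    fin_cases i
    · show clam ε (1, x) * cx ε 0 (1, x) = _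
      rw [hlam0, zero_mul]; rfl
    · show clam ε (1, x) * cx ε 1 (1, x) = _
      rw [hlam0, zero_mul]; rfl
    · show ctau ε (1, x) = _
      unfold ctau
      rw [hs]
      show (1 - 1) * ct ε (1, x) + ε * 1 = (![0, 0, ε, 0, 0] : Fin 5 → ℝ) 2
      rw [show (![0, 0, ε, 0, 0] : Fin 5 → ℝ) 2 = ε from rfl]
      ring
    · show clam ε (1, x) * cx ε 3 (1, x) = _
      rw [hlam0, zero_mul]; rfl
    · show clam ε (1, x) * cx ε 4 (1, x) = _
      rw [hlam0, zero_mul]; rfl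

end Contraction

section Overlap

/-- parametrisation of the open interval `(-1,1)` -/
def ovt (s : ℝ) : ℝ := s / Real.sqrt (1 + s ^ 2)

lemma ovt_sq (s : ℝ) : ovt s ^ 2 = s ^ 2 / (1 + s ^ 2) := by
  have h : (0:ℝ) < 1 + s ^ 2 := by positivity
  rw [ovt, div_pow, Real.sq_sqrt h.le]

lemma ovt_sq_lt (s : ℝ) : ovt s ^ 2 < 1 := by
  have h : (0:ℝ) < 1 + s ^ 2 := by positivity
  rw [ovt_sq, div_lt_one h]
  linarith

/-- the radius corresponding to `ovt s` -/
def ovr (s : ℝ) : ℝ := Real.sqrt ((1 - ovt s ^ 2) / 2)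

lemma ovr_sq (s : ℝ) : ovr s ^ 2 = (1 - ovt s ^ 2) / 2 := by
  apply Real.sq_sqrt
  have := ovt_sq_lt s
  linarith

/-- parametrisation of the equatorial part of the suspension -/
def Fov (p : ℝ × ℝ × ℝ) : T5 :=
  ⟨![ovr p.2.2 * Real.cos p.1, ovr p.2.2 * Real.sin p.1, ovt p.2.2,
      ovr p.2.2 * Real.cos p.2.1, ovr p.2.2 * Real.sin p.2.1], by
    have hc1 := Real.sin_sq_add_cos_sq p.1
    have hc2 := Real.sin_sq_add_cos_sq p.2.1
    have hr := ovr_sq p.2.2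
    constructor
    · show (ovr p.2.2 * Real.cos p.1) ^ 2 + (ovr p.2.2 * Real.sin p.1) ^ 2 =
        (ovr p.2.2 * Real.cos p.2.1) ^ 2 + (ovr p.2.2 * Real.sin p.2.1) ^ 2
      nlinarith
    · rw [Fin.sum_univ_five]
      show (ovr p.2.2 * Real.cos p.1) ^ 2 + (ovr p.2.2 * Real.sin p.1) ^ 2 + ovt p.2.2 ^ 2 +
        (ovr p.2.2 * Real.cos p.2.1) ^ 2 + (ovr p.2.2 * Real.sin p.2.1) ^ 2 = 1
      nlinarith⟩

lemma continuous_ovt : Continuous ovt := by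
  apply Continuous.div
  · fun_prop
  · fun_prop
  · intro s
    have h : (0:ℝ) < 1 + s ^ 2 := by positivity
    exact (Real.sqrt_pos.2 h).ne'

lemma continuous_ovr : Continuous ovr := by
  apply Real.continuous_sqrt.comp
  have := continuous_ovt
  fun_prop

lemma continuous_Fov : Continuous Fov := by
  apply Continuous.subtype_mk
  have h1 : Continuous fun p : ℝ × ℝ × ℝ => p.1 := continuous_fst
  have h2 : Continuous fun p : ℝ × ℝ × ℝ => p.2.1 := continuous_fst.comp continuous_snd
  have h3 : Continuous fun p : ℝ × ℝ × ℝ => p.2.2 := continuous_snd.comp continuous_snd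
  have ht := continuous_ovt
  have hr := continuous_ovr
  exact contMk (by fun_prop) (by fun_prop) (by fun_prop) (by fun_prop) (by fun_prop)

lemma Fov_mem (p : ℝ × ℝ × ℝ) : Fov p ∈ Uset 1 ∩ Uset (-1) := by
  have h := ovt_sq_lt p.2.2
  rw [sq_lt_one_iff_abs_lt_one, abs_lt] at h
  have habs := h
  constructor
  · show -1 < 1 * (Fov p).1 2
    rw [show (Fov p).1 2 = ovt p.2.2 from rfl, one_mul]
    exact habs.1
  · show -1 < -1 * (Fov p).1 2
    rw [show (Fov p).1 2 = ovt p.2.2 from rfl]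
    linarith [habs.2]

lemma exists_angle {a b r : ℝ} (h : a ^ 2 + b ^ 2 = r ^ 2) (hr : 0 < r) :
    ∃ φ : ℝ, r * Real.cos φ = a ∧ r * Real.sin φ = b := by
  set z : ℂ := ⟨a, b⟩ with hz
  have habs : ‖z‖ = r := by
    rw [Complex.norm_def, Complex.normSq_mk]
    rw [show a * a + b * b = r ^ 2 from by nlinarith]
    exact Real.sqrt_sq hr.le
  have hz0 : z ≠ 0 := by
    intro h0
    rw [h0] at habs
    simp at habs
    exact absurd habs.symm hr.ne'
  refine ⟨Complex.arg z, ?_, ?_⟩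
  · rw [Complex.cos_arg hz0, habs]
    field_simp
    rfl
  · rw [Complex.sin_arg, habs]
    field_simp
    rfl

lemma Fov_surj {x : T5} (hx : x ∈ Uset 1 ∩ Uset (-1)) : ∃ p, Fov p = x := by
  obtain ⟨hx1, hx2⟩ := hx
  set t := x.1 2 with hts
  have ht1 : -1 < t := by have := hx1; simpa [Uset] using this
  have ht2 : t < 1 := by
    have := hx2
    simp only [Uset, mem_setOf_eq, neg_mul, one_mul, neg_lt] at this
    linarith [this]
  have h1t : (0:ℝ) < 1 - t ^ 2 := by nlinarith
  set s := t / Real.sqrt (1 - t ^ 2) with hs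
  have hsq : Real.sqrt (1 - t ^ 2) > 0 := Real.sqrt_pos.2 h1t
  have hkey : 1 + s ^ 2 = 1 / (1 - t ^ 2) := by
    rw [hs, div_pow, Real.sq_sqrt h1t.le]
    field_simp
    ring
  have hovt : ovt s = t := by
    rw [ovt, hkey, show (1:ℝ) / (1 - t ^ 2) = (1 - t ^ 2)⁻¹ from one_div _,
      Real.sqrt_inv]
    rw [hs]
    field_simp
  have hrr : ovr s ^ 2 = x.1 0 ^ 2 + x.1 1 ^ 2 := by
    rw [ovr_sq, hovt]
    have := T5.eqn x
    linarith
  have hrpos : 0 < ovr s := by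
    have h0 : 0 ≤ ovr s := Real.sqrt_nonneg _
    rcases h0.lt_or_eq with h | h
    · exact h
    · exfalso
      have h2 : ovr s ^ 2 = (1 - t ^ 2) / 2 := by rw [ovr_sq, hovt]
      rw [← h] at h2
      simp at h2
      nlinarith
  have hrr2 : ovr s ^ 2 = x.1 3 ^ 2 + x.1 4 ^ 2 := by
    rw [hrr]; exact x.2.1
  obtain ⟨φ, hφ1, hφ2⟩ := exists_angle hrr.symm hrpos
  obtain ⟨ψ, hψ1, hψ2⟩ := exists_angle hrr2.symm hrpos
  refine ⟨(φ, ψ, s), ?_⟩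
  apply Subtype.ext
  funext i
  fin_cases i
  · exact hφ1
  · exact hφ2
  · exact hovt
  · exact hψ1
  · exact hψ2

lemma overlap_pathConnected : IsPathConnected (Uset 1 ∩ Uset (-1)) := by
  have heq : Uset 1 ∩ Uset (-1) = range Fov := by
    apply Subset.antisymm
    · intro x hx
      obtain ⟨p, hp⟩ := Fov_surj hx
      exact ⟨p, hp⟩
    · rintro x ⟨p, rfl⟩
      exact Fov_mem p
  rw [heq, ← image_univ]
  exact (isPathConnected_univ (X := ℝ × ℝ × ℝ)).image continuous_Fov

end Overlap

lemma joined_of_mem {Y : Type*} [TopologicalSpace Y] {s : Set Y} [PathConnectedSpace ↥s]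
    {p q : Y} (hp : p ∈ s) (hq : q ∈ s) : Joined p q :=
  ⟨(PathConnectedSpace.somePath (⟨p, hp⟩ : s) ⟨q, hq⟩).map continuous_subtype_val⟩

lemma Uset_cover : Uset 1 ∪ Uset (-1) = univ := by
  ext p
  simp only [Uset, mem_union, mem_setOf_eq, mem_univ, iff_true, one_mul, neg_mul, neg_lt]
  by_cases h : -1 < p.1 2
  · exact Or.inl h
  · push_neg at h
    right
    have h2 := T5.coord2_mem p
    nlinarith

lemma pole_one_not_mem : pole 1 (by norm_num) ∉ Uset (-1) := by
  intro h
  have : (-1:ℝ) < -1 * (pole 1 (by norm_num)).1 2 := h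
  rw [show ((pole 1 (by norm_num)).1 2 : ℝ) = 1 from rfl] at this
  linarith

lemma pathConnected_T5 : PathConnectedSpace T5 := by
  haveI hC1 : ContractibleSpace ↥(Uset (1:ℝ)) := contractible_Uset (by norm_num)
  haveI hC2 : ContractibleSpace ↥(Uset (-1:ℝ)) := contractible_Uset (by norm_num)
  have hnp : pole 1 (by norm_num) ∈ Uset 1 := pole_mem 1 (by norm_num)
  have hw := Fov_mem (0, 0, 0)
  have key : ∀ p : T5, Joined p (pole 1 (by norm_num)) := by
    intro p
    by_cases hp : p ∈ Uset 1
    · exact joined_of_mem hp hnp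
    · have hpV : p ∈ Uset (-1) := by
        have := Uset_cover ▸ mem_univ p
        rcases (Uset_cover ▸ mem_univ p : p ∈ Uset 1 ∪ Uset (-1)) with h | h
        · exact absurd h hp
        · exact h
      exact (joined_of_mem hpV hw.2).trans (joined_of_mem hw.1 hnp)
  exact ⟨⟨pole 1 (by norm_num)⟩, fun x y => (key x).trans (key y).symm⟩

end Specific

/-- The intersection `Z = {x ∈ ℝ⁵ : x₁² + x₂² = x₄² + x₅², ∑ xᵢ² = 1}` associated to the
square pyramid (the suspension of the torus) is simply connected: it is path-connected
and its fundamental group at every basepoint is trivial. -/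
theorem stmt_11 :
    PathConnectedSpace {x : Fin 5 → ℝ //
        x 0 ^ 2 + x 1 ^ 2 = x 3 ^ 2 + x 4 ^ 2 ∧ ∑ i, x i ^ 2 = 1} ∧
      ∀ z : {x : Fin 5 → ℝ //
          x 0 ^ 2 + x 1 ^ 2 = x 3 ^ 2 + x 4 ^ 2 ∧ ∑ i, x i ^ 2 = 1},
        Subsingleton (FundamentalGroup {x : Fin 5 → ℝ //
          x 0 ^ 2 + x 1 ^ 2 = x 3 ^ 2 + x 4 ^ 2 ∧ ∑ i, x i ^ 2 = 1} z) := by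
  haveI hC1 : ContractibleSpace ↥(Uset (1:ℝ)) := contractible_Uset (by norm_num)
  haveI hC2 : ContractibleSpace ↥(Uset (-1:ℝ)) := contractible_Uset (by norm_num)
  haveI hPC : PathConnectedSpace T5 := pathConnected_T5
  haveI hsub : Subsingleton (FundamentalGroup T5 (pole 1 (one_pow 2))) :=
    subsingleton_fundamentalGroup_of_cover (Uset 1) (Uset (-1)) (isOpen_Uset 1)
      (isOpen_Uset (-1)) Uset_cover overlap_pathConnected (pole_mem 1 (by norm_num))
      pole_one_not_mem
  refine ⟨hPC, fun z => ?_⟩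
  exact Equiv.subsingleton
    (FundamentalGroup.fundamentalGroupMulEquivOfPathConnected z (pole 1 (one_pow 2))).toEquiv
end
end

section
/- Let Z = {x ∈ ℝ⁵ : x₁² + x₂² = x₄² + x₅² and ∑_{i=1}^5 x_i² = 1} be the intersection of coaxial ellipsoids associated to the square pyramid P_{p4}, and let Ž = Z ∖ {(0,0,1,0,0), (0,0,−1,0,0)} be its smooth part, obtained by removing its two singular points. Then Ž, with its subspace topology, is homeomorphic to (S¹ × S¹) × (−1, 1), where S¹ is the unit circle in ℝ². -/
open Real Set

noncomputable def rr (t : ℝ) : ℝ := Real.sqrt ((1 - t^2)/2)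
lemma rr_sq {t : ℝ} (h : t^2 ≤ 1) : rr t ^ 2 = (1 - t^2)/2 := Real.sq_sqrt (by nlinarith)
lemma rr_pos {t : ℝ} (h : t^2 < 1) : 0 < rr t := Real.sqrt_pos.2 (by nlinarith)
lemma rr_cont : Continuous rr := by unfold rr; fun_prop

noncomputable def e2 (a b : ℝ) : EuclideanSpace ℝ (Fin 2) := (WithLp.equiv 2 _).symm ![a, b]

lemma e2_mem_sphere {a b : ℝ} (h : a^2 + b^2 = 1) :
    e2 a b ∈ Metric.sphere (0 : EuclideanSpace ℝ (Fin 2)) 1 := by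
  rw [mem_sphere_zero_iff_norm, EuclideanSpace.norm_eq]
  simp only [e2, Fin.sum_univ_two]
  norm_num [sq_abs]
  rw [← Real.sqrt_one]
  simpa [sq] using h

lemma sphere_coords {u : EuclideanSpace ℝ (Fin 2)}
    (h : u ∈ Metric.sphere (0 : EuclideanSpace ℝ (Fin 2)) 1) :
    u 0 ^2 + u 1 ^2 = 1 := by
  rw [mem_sphere_zero_iff_norm, EuclideanSpace.norm_eq] at h
  simp only [Fin.sum_univ_two, sq_abs, Real.norm_eq_abs] at h
  nlinarith [Real.sq_sqrt (by positivity : (0:ℝ) ≤ u 0 ^2 + u 1^2)]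

lemma e2_cont {α : Type*} [TopologicalSpace α] {f g : α → ℝ} (hf : Continuous f)
    (hg : Continuous g) : Continuous fun x => e2 (f x) (g x) := by
  apply Continuous.comp (PiLp.continuous_toLp 2 (fun _ : Fin 2 => ℝ))
  apply continuous_pi
  intro i
  fin_cases i <;> simpa

lemma e2_eq {u : EuclideanSpace ℝ (Fin 2)} : e2 (u 0) (u 1) = u := by
  ext i; fin_cases i <;> rfl

def Zset : Set (Fin 5 → ℝ) := {x | x 0 ^ 2 + x 1 ^ 2 = x 3 ^ 2 + x 4 ^ 2 ∧ ∑ i, x i ^ 2 = 1}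

lemma key {x : Fin 5 → ℝ}
    (hx : x ∈ Zset \ {![0, 0, 1, 0, 0], ![0, 0, -1, 0, 0]}) :
    x 2 ^ 2 < 1 ∧ x 0 ^2 + x 1 ^2 = (1 - x 2 ^2)/2 ∧ x 3 ^2 + x 4 ^2 = (1 - x 2 ^2)/2 := by
  obtain ⟨⟨h1, h2⟩, h3⟩ := hx
  rw [Fin.sum_univ_five] at h2
  simp only [mem_insert_iff, mem_singleton_iff, not_or] at h3
  obtain ⟨hA, hB⟩ := h3
  have hpos : 0 < x 0 ^2 + x 1 ^2 := by
    rcases lt_or_eq_of_le (by positivity : (0:ℝ) ≤ x 0 ^2 + x 1 ^2) with h | h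
    · exact h
    have h0 : x 0 = 0 := by nlinarith [sq_nonneg (x 0), sq_nonneg (x 1)]
    have h1' : x 1 = 0 := by nlinarith [sq_nonneg (x 0), sq_nonneg (x 1)]
    have h3' : x 3 = 0 := by nlinarith [sq_nonneg (x 3), sq_nonneg (x 4)]
    have h4' : x 4 = 0 := by nlinarith [sq_nonneg (x 3), sq_nonneg (x 4)]
    have h2' : (x 2 - 1) * (x 2 + 1) = 0 := by nlinarith
    rcases mul_eq_zero.1 h2' with h | h
    · exact absurd (by funext i; fin_cases i <;> simp [h0, h1', h3', h4'] <;> linarith) hA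
    · exact absurd (by funext i; fin_cases i <;> simp [h0, h1', h3', h4'] <;> linarith) hB
  refine ⟨by nlinarith, by nlinarith, by nlinarith⟩

/-- raw backward map -/
noncomputable def Bw (p : (EuclideanSpace ℝ (Fin 2) × EuclideanSpace ℝ (Fin 2)) × ℝ) :
    Fin 5 → ℝ :=
  ![rr p.2 * p.1.1 0, rr p.2 * p.1.1 1, p.2, rr p.2 * p.1.2 0, rr p.2 * p.1.2 1]

abbrev Sph := Metric.sphere (0 : EuclideanSpace ℝ (Fin 2)) 1

lemma Bw_mem (u v : Sph) (t : Ioo (-1:ℝ) 1) :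
    Bw ((u.1, v.1), t.1) ∈ Zset \ {![0, 0, 1, 0, 0], ![0, 0, -1, 0, 0]} := by
  obtain ⟨t, ht1, ht2⟩ := t
  have ht : t^2 < 1 := by nlinarith
  have hr2 := rr_sq ht.le
  have hr := rr_pos ht
  have hu := sphere_coords u.2
  have hv := sphere_coords v.2
  constructor
  · constructor
    · show (rr t * u.1 0)^2 + (rr t * u.1 1)^2 = (rr t * v.1 0)^2 + (rr t * v.1 1)^2
      nlinarith
    · rw [Fin.sum_univ_five]
      show (rr t * u.1 0)^2 + (rr t * u.1 1)^2 + t^2 + (rr t * v.1 0)^2 + (rr t * v.1 1)^2 = 1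
      nlinarith
  · simp only [mem_insert_iff, mem_singleton_iff, not_or]
    constructor <;> intro h <;>
    · have h0 := congrFun h 0
      have h1 := congrFun h 1
      simp [Bw] at h0 h1
      rcases h0 with h0 | h0 <;> rcases h1 with h1 | h1 <;> nlinarith

/-- raw forward map -/
noncomputable def Fw (x : Fin 5 → ℝ) :
    (EuclideanSpace ℝ (Fin 2) × EuclideanSpace ℝ (Fin 2)) × ℝ :=
  ((e2 (x 0 / rr (x 2)) (x 1 / rr (x 2)), e2 (x 3 / rr (x 2)) (x 4 / rr (x 2))), x 2)

lemma Bw_continuous : Continuous Bw := by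
  apply continuous_pi
  intro i
  fin_cases i <;> simp only [Bw] <;> simp <;>
    [skip; skip; exact continuous_snd; skip; skip] <;>
    exact ((rr_cont.comp continuous_snd).mul
      ((by first
        | exact (EuclideanSpace.proj (0 : Fin 2)).continuous.comp (continuous_fst.comp continuous_fst)
        | exact (EuclideanSpace.proj (1 : Fin 2)).continuous.comp (continuous_fst.comp continuous_fst)
        | exact (EuclideanSpace.proj (0 : Fin 2)).continuous.comp (continuous_snd.comp continuous_fst)
        | exact (EuclideanSpace.proj (1 : Fin 2)).continuous.comp (continuous_snd.comp continuous_fst))))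

lemma Fw_mem1 {x : Fin 5 → ℝ}
    (hx : x ∈ Zset \ {![0, 0, 1, 0, 0], ![0, 0, -1, 0, 0]}) :
    (Fw x).1.1 ∈ Sph := by
  obtain ⟨ht, h01, h34⟩ := key hx
  have hr2 := rr_sq ht.le
  have hr := rr_pos ht
  apply e2_mem_sphere
  field_simp
  nlinarith

lemma Fw_mem2 {x : Fin 5 → ℝ}
    (hx : x ∈ Zset \ {![0, 0, 1, 0, 0], ![0, 0, -1, 0, 0]}) :
    (Fw x).1.2 ∈ Sph := by
  obtain ⟨ht, h01, h34⟩ := key hx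
  have hr2 := rr_sq ht.le
  have hr := rr_pos ht
  apply e2_mem_sphere
  field_simp
  nlinarith

lemma Fw_mem3 {x : Fin 5 → ℝ}
    (hx : x ∈ Zset \ {![0, 0, 1, 0, 0], ![0, 0, -1, 0, 0]}) :
    (Fw x).2 ∈ Ioo (-1:ℝ) 1 := by
  obtain ⟨ht, -, -⟩ := key hx
  have := abs_lt.1 ((sq_lt_one_iff_abs_lt_one _).1 ht)
  exact ⟨this.1, this.2⟩

lemma Bw_Fw {x : Fin 5 → ℝ}
    (hx : x ∈ Zset \ {![0, 0, 1, 0, 0], ![0, 0, -1, 0, 0]}) :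
    Bw (Fw x) = x := by
  obtain ⟨ht, -, -⟩ := key hx
  have hr := (rr_pos ht).ne'
  funext i
  fin_cases i <;> simp [Bw, Fw, e2] <;>
    first
      | rfl
      | exact mul_div_cancel₀ _ hr

lemma Fw_Bw (u v : Sph) (t : Ioo (-1:ℝ) 1) :
    Fw (Bw ((u.1, v.1), t.1)) = ((u.1, v.1), t.1) := by
  obtain ⟨t, ht1, ht2⟩ := t
  have ht : t^2 < 1 := by nlinarith
  have hr := (rr_pos ht).ne'
  have h2 : Bw ((u.1, v.1), t) 2 = t := rfl
  refine Prod.ext (Prod.ext ?_ ?_) ?_ <;> simp only [Fw, h2]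
  · rw [show Bw ((u.1, v.1), t) 0 = rr t * u.1 0 from rfl,
      show Bw ((u.1, v.1), t) 1 = rr t * u.1 1 from rfl,
      mul_div_cancel_left₀ _ hr, mul_div_cancel_left₀ _ hr]
    exact e2_eq
  · rw [show Bw ((u.1, v.1), t) 3 = rr t * v.1 0 from rfl,
      show Bw ((u.1, v.1), t) 4 = rr t * v.1 1 from rfl,
      mul_div_cancel_left₀ _ hr, mul_div_cancel_left₀ _ hr]
    exact e2_eq


/-- The smooth part of the intersection associated to the square pyramid — the suspension
of the torus minus its two singular points `(0,0,±1,0,0)` — is homeomorphic to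
`(S¹ × S¹) × (−1, 1)`. -/
theorem stmt_12
    (Z : Set (Fin 5 → ℝ))
    (hZ : Z = {x | x 0 ^ 2 + x 1 ^ 2 = x 3 ^ 2 + x 4 ^ 2 ∧ ∑ i, x i ^ 2 = 1})
    (Zsm : Set (Fin 5 → ℝ))
    (hZsm : Zsm = Z \ {![0, 0, 1, 0, 0], ![0, 0, -1, 0, 0]}) :
    Nonempty (Zsm ≃ₜ
      ((Metric.sphere (0 : EuclideanSpace ℝ (Fin 2)) 1 ×
          Metric.sphere (0 : EuclideanSpace ℝ (Fin 2)) 1) ×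
        Set.Ioo (-1 : ℝ) 1)) := by
  have hZ' : Z = Zset := hZ
  subst hZ'
  subst hZsm
  refine ⟨{
    toFun := fun x => ⟨⟨⟨(Fw x.1).1.1, Fw_mem1 x.2⟩, ⟨(Fw x.1).1.2, Fw_mem2 x.2⟩⟩,
      ⟨(Fw x.1).2, Fw_mem3 x.2⟩⟩
    invFun := fun p => ⟨Bw ((p.1.1.1, p.1.2.1), p.2.1), Bw_mem p.1.1 p.1.2 p.2⟩
    left_inv := fun x => Subtype.ext (Bw_Fw x.2)
    right_inv := fun p => by
      have := Fw_Bw p.1.1 p.1.2 p.2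
      refine Prod.ext (Prod.ext ?_ ?_) ?_ <;> apply Subtype.ext
      · exact congrArg (fun q => q.1.1) this
      · exact congrArg (fun q => q.1.2) this
      · exact congrArg (fun q => q.2) this
    continuous_toFun := by
      have hx2 : Continuous fun x : ((Zset \ {![0, 0, 1, 0, 0], ![0, 0, -1, 0, 0]} : Set (Fin 5 → ℝ))) => rr (x.1 2) :=
        rr_cont.comp ((continuous_apply (2 : Fin 5)).comp continuous_subtype_val)
      have hne : ∀ x : ((Zset \ {![0, 0, 1, 0, 0], ![0, 0, -1, 0, 0]} : Set (Fin 5 → ℝ))), rr (x.1 2) ≠ 0 :=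
        fun x => (rr_pos (key x.2).1).ne'
      have hc : ∀ i : Fin 5, Continuous fun x : ((Zset \ {![0, 0, 1, 0, 0], ![0, 0, -1, 0, 0]} : Set (Fin 5 → ℝ))) => x.1 i :=
        fun i => (continuous_apply i).comp continuous_subtype_val
      refine Continuous.prodMk (Continuous.prodMk ?_ ?_) ?_ <;> apply Continuous.subtype_mk
      · exact e2_cont ((hc 0).div hx2 hne) ((hc 1).div hx2 hne)
      · exact e2_cont ((hc 3).div hx2 hne) ((hc 4).div hx2 hne)
      · exact hc 2
    continuous_invFun := by
      apply Continuous.subtype_mk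
      exact Bw_continuous.comp (((continuous_subtype_val.comp (continuous_fst.comp continuous_fst)).prodMk
        (continuous_subtype_val.comp (continuous_snd.comp continuous_fst))).prodMk
        (continuous_subtype_val.comp continuous_snd)) }⟩
end
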